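/- Let C be a completely regular code with covering radius 2 in J(n,4) whose intersection matrix M (with rows summing to 4n−16 and parameters β₀, γ₁, β₁, γ₂) has eigenvalues θ₀(n,4) = 4(n−4), θ₂(n,4) = 2(n−6)−2, θ₃(n,4) = (n−7)−3. If β₀ ≠ γ₂, then γ₁ = −(β₀−2n+2)(β₀−3n+6)/(β₀−γ₂) and β₁ = (γ₂−2n+2)(γ₂−3n+6)/(β₀−γ₂). -/
import Mathlib


open Polynomial in
/-- solving the polynomial identities from the characteristic polynomial of
the intersection matrix of a completely regular code with covering radius 2 in `J(n,4)`
whose eigenvalues are `θ₀(n,4), θ₂(n,4), θ₃(n,4)`, in the case `β₀ ≠ γ₂`. -/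
theorem stmt3 (n : ℕ) (β₀ β₁ γ₁ γ₂ : ℚ)
    (M : Matrix (Fin 3) (Fin 3) ℚ)
    (hM : M = !![4 * (n : ℚ) - 16 - β₀, β₀, 0;
                 γ₁, 4 * (n : ℚ) - 16 - γ₁ - β₁, β₁;
                 0, γ₂, 4 * (n : ℚ) - 16 - γ₂])
    (hchar : M.charpoly =
      (X - C (4 * ((n : ℚ) - 4))) * (X - C (2 * ((n : ℚ) - 6) - 2)) *
        (X - C (((n : ℚ) - 7) - 3)))
    (hne : β₀ ≠ γ₂) :
    γ₁ = -((β₀ - 2 * (n : ℚ) + 2) * (β₀ - 3 * (n : ℚ) + 6)) / (β₀ - γ₂) ∧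
    β₁ = ((γ₂ - 2 * (n : ℚ) + 2) * (γ₂ - 3 * (n : ℚ) + 6)) / (β₀ - γ₂) := by
  subst hM
  rw [Matrix.charpoly, Matrix.det_fin_three] at hchar
  simp [Matrix.charmatrix_apply, Matrix.diagonal_apply, Fin.ext_iff] at hchar
  have h0 := congrArg (Polynomial.eval 0) hchar
  have h1 := congrArg (Polynomial.eval 1) hchar
  have h2 := congrArg (Polynomial.eval 2) hchar
  simp only [Polynomial.eval_mul, Polynomial.eval_add, Polynomial.eval_sub,
    Polynomial.eval_neg, Polynomial.eval_X, Polynomial.eval_C, Polynomial.eval_natCast,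
    Polynomial.eval_ofNat, Polynomial.eval_one] at h0 h1 h2
  have hsub : β₀ - γ₂ ≠ 0 := sub_ne_zero.mpr hne
  constructor
  · field_simp
    linear_combination (((β₀ + 33 - 8*(n:ℚ))/2)+1)*h0 + (-2*((β₀ + 33 - 8*(n:ℚ))/2)-1)*h1 +
      ((β₀ + 33 - 8*(n:ℚ))/2)*h2
  · field_simp
    linear_combination (-(((γ₂ + 33 - 8*(n:ℚ))/2)+1))*h0 + (2*((γ₂ + 33 - 8*(n:ℚ))/2)+1)*h1 +
      (-((γ₂ + 33 - 8*(n:ℚ))/2))*h2
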